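/- Unaccelerated smooth minimization via mirror prox: let f : ℝᵈ → ℝ be L-smooth convex with minimizer x*, g := ∇f, r(x) := (1/2)‖x₀ - x‖₂². Running mirror prox with step parameter L for T iterations from x₀ produces iterates {w_t} with f((1/T)Σ_{t<T} w_t) - f(x*) ≤ L‖x₀ - x*‖₂²/(2T). -/

import Mathlib

open scoped RealInnerProductSpace

section MirrorProxAux

variable {d : ℕ}

local notation "E" => EuclideanSpace ℝ (Fin d)

lemma mp_grad_ineq (f : E → ℝ) (g : E → E)
    (hdiff : ∀ x, HasGradientAt f (g x) x) (hconv : ConvexOn ℝ Set.univ f)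
    (x y : E) : f x + ⟪g x, y - x⟫ ≤ f y := by
  set φ : ℝ → ℝ := fun t => f (t • (y - x) + x) with hφ
  have hφconv : ConvexOn ℝ Set.univ φ := by
    have := hconv.comp_affineMap (AffineMap.lineMap x y : ℝ →ᵃ[ℝ] E)
    simpa [Function.comp_def, AffineMap.lineMap_apply, hφ] using this
  have hder : HasDerivAt φ ⟪g x, y - x⟫ 0 := by
    have hc : HasDerivAt (fun t : ℝ => t • (y - x) + x) (y - x) 0 := by
      simpa using ((hasDerivAt_id (0:ℝ)).smul_const (y - x)).add_const x
    have hF : HasFDerivAt f (InnerProductSpace.toDual ℝ _ (g x) : E →L[ℝ] ℝ)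
        ((fun t : ℝ => t • (y - x) + x) 0) := by simpa using (hdiff x).hasFDerivAt
    have := hF.comp_hasDerivAt 0 hc
    simp only [InnerProductSpace.toDual_apply_apply] at this
    exact this
  have hslope := hφconv.le_slope_of_hasDerivAt (Set.mem_univ (0:ℝ))
    (Set.mem_univ (1:ℝ)) zero_lt_one hder
  have h0 : φ 0 = f x := by simp [hφ]
  have h1 : φ 1 = f y := by simp [hφ]
  rw [slope_def_field, h0, h1] at hslope
  rw [sub_zero, div_one] at hslope
  linarith

lemma mp_step (L : ℝ) (hL : 0 < L) (a b c u ga gb : E)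
    (hga : ga = L • (a - b)) (hgb : gb = L • (a - c))
    (hlip : ‖gb - ga‖ ≤ L * ‖b - a‖) :
    ⟪gb, b - u⟫ ≤ L / 2 * (‖a - u‖ ^ 2 - ‖c - u‖ ^ 2) := by
  have h1 : ⟪gb - ga, b - c⟫ ≤ L / 2 * (‖b - a‖ ^ 2 + ‖b - c‖ ^ 2) := by
    calc ⟪gb - ga, b - c⟫ ≤ ‖gb - ga‖ * ‖b - c‖ := real_inner_le_norm _ _
      _ ≤ (L * ‖b - a‖) * ‖b - c‖ :=
        mul_le_mul_of_nonneg_right hlip (norm_nonneg _)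
      _ ≤ L / 2 * (‖b - a‖ ^ 2 + ‖b - c‖ ^ 2) := by
        nlinarith [sq_nonneg (‖b - a‖ - ‖b - c‖)]
  have hid : ⟪gb, b - u⟫
      = L / 2 * (‖a - u‖ ^ 2 - ‖c - u‖ ^ 2 - ‖b - a‖ ^ 2 - ‖b - c‖ ^ 2)
        + ⟪gb - ga, b - c⟫ := by
    have hn : ∀ v : E, ‖v‖ ^ 2 = ⟪v, v⟫ := fun v => (real_inner_self_eq_norm_sq v).symm
    rw [hga, hgb]
    simp only [hn, inner_sub_left, inner_sub_right, real_inner_smul_left, smul_sub,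
      real_inner_comm a b, real_inner_comm a c, real_inner_comm a u, real_inner_comm b c,
      real_inner_comm b u, real_inner_comm c u]
    ring
  linarith

end MirrorProxAux

/-- Unaccelerated smooth minimization via mirror prox (Lemma 12): for `L`-smooth convex
`f : ℝᵈ → ℝ` with minimizer `x*`, the mirror prox iterates
`w_t = z_t - (1/L)∇f(z_t)`, `z_{t+1} = z_t - (1/L)∇f(w_t)` from `z₀ = x₀` satisfy
`f((1/T)∑_{t<T} w_t) - f(x*) ≤ L‖x₀ - x*‖²/(2T)`. -/
theorem mirror_prox_smooth_minimization {d : ℕ}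
    (f : EuclideanSpace ℝ (Fin d) → ℝ)
    (f' : EuclideanSpace ℝ (Fin d) → EuclideanSpace ℝ (Fin d))
    (L : ℝ) (hL : 0 < L)
    (hdiff : ∀ x, HasGradientAt f (f' x) x)
    (hconv : ConvexOn ℝ Set.univ f)
    (hsmooth : ∀ x y, ‖f' x - f' y‖ ≤ L * ‖x - y‖)
    (xs : EuclideanSpace ℝ (Fin d)) (hmin : ∀ x, f xs ≤ f x)
    (x₀ : EuclideanSpace ℝ (Fin d))
    (z w : ℕ → EuclideanSpace ℝ (Fin d))
    (hz0 : z 0 = x₀)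
    (hw : ∀ t, w t = z t - (1 / L) • f' (z t))
    (hz : ∀ t, z (t + 1) = z t - (1 / L) • f' (w t))
    (T : ℕ) (hT : 0 < T) :
    f ((T : ℝ)⁻¹ • ∑ t ∈ Finset.range T, w t) - f xs ≤ L * ‖x₀ - xs‖ ^ 2 / (2 * T) := by
  have hLne : L ≠ 0 := ne_of_gt hL
  have hTpos : (0:ℝ) < T := by exact_mod_cast hT
  have hga : ∀ t, f' (z t) = L • (z t - w t) := by
    intro t
    have h : z t - w t = (1 / L) • f' (z t) := by rw [hw t, sub_sub_cancel]
    rw [h, smul_smul, mul_one_div, div_self hLne, one_smul]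
  have hgb : ∀ t, f' (w t) = L • (z t - z (t + 1)) := by
    intro t
    have h : z t - z (t + 1) = (1 / L) • f' (w t) := by rw [hz t, sub_sub_cancel]
    rw [h, smul_smul, mul_one_div, div_self hLne, one_smul]
  have step : ∀ t, ⟪f' (w t), w t - xs⟫
      ≤ L / 2 * (‖z t - xs‖ ^ 2 - ‖z (t + 1) - xs‖ ^ 2) := fun t =>
    mp_step L hL (z t) (w t) (z (t + 1)) xs (f' (z t)) (f' (w t)) (hga t) (hgb t)
      (hsmooth (w t) (z t))
  have regret : ∑ t ∈ Finset.range T, ⟪f' (w t), w t - xs⟫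
      ≤ L / 2 * ‖x₀ - xs‖ ^ 2 := by
    calc ∑ t ∈ Finset.range T, ⟪f' (w t), w t - xs⟫
        ≤ ∑ t ∈ Finset.range T,
            (L / 2 * (‖z t - xs‖ ^ 2 - ‖z (t + 1) - xs‖ ^ 2)) :=
          Finset.sum_le_sum fun t _ => step t
      _ = L / 2 * (‖z 0 - xs‖ ^ 2 - ‖z T - xs‖ ^ 2) := by
          rw [← Finset.mul_sum,
            Finset.sum_range_sub' (fun t => ‖z t - xs‖ ^ 2) T]
      _ ≤ L / 2 * ‖x₀ - xs‖ ^ 2 := by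
          rw [hz0]
          have := sq_nonneg ‖z T - xs‖
          nlinarith
  have hfw : ∀ t, f (w t) - f xs ≤ ⟪f' (w t), w t - xs⟫ := by
    intro t
    have h := mp_grad_ineq f f' hdiff hconv (w t) xs
    rw [show xs - w t = -(w t - xs) by abel, inner_neg_right] at h
    linarith
  have havg : f ((T : ℝ)⁻¹ • ∑ t ∈ Finset.range T, w t)
      ≤ (T : ℝ)⁻¹ * ∑ t ∈ Finset.range T, f (w t) := by
    have h₁ : ∑ _t ∈ Finset.range T, (T : ℝ)⁻¹ = 1 := by
      rw [Finset.sum_const, Finset.card_range, nsmul_eq_mul, mul_inv_cancel₀ (ne_of_gt hTpos)]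
    have := hconv.map_sum_le (fun t _ => by positivity) h₁ (fun t _ => Set.mem_univ (w t))
    simpa [← Finset.smul_sum, smul_eq_mul, ← Finset.mul_sum] using this
  have hsum : ∑ t ∈ Finset.range T, (f (w t) - f xs)
      = ∑ t ∈ Finset.range T, f (w t) - T * f xs := by
    rw [Finset.sum_sub_distrib, Finset.sum_const, Finset.card_range, nsmul_eq_mul]
  have key : ∑ t ∈ Finset.range T, (f (w t) - f xs) ≤ L / 2 * ‖x₀ - xs‖ ^ 2 := by
    calc ∑ t ∈ Finset.range T, (f (w t) - f xs)
        ≤ ∑ t ∈ Finset.range T, ⟪f' (w t), w t - xs⟫ :=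
          Finset.sum_le_sum fun t _ => hfw t
      _ ≤ L / 2 * ‖x₀ - xs‖ ^ 2 := regret
  have hfinal : f ((T : ℝ)⁻¹ • ∑ t ∈ Finset.range T, w t) - f xs
      ≤ (T : ℝ)⁻¹ * (L / 2 * ‖x₀ - xs‖ ^ 2) := by
    have h2 : (T : ℝ)⁻¹ * ∑ t ∈ Finset.range T, (f (w t) - f xs)
        ≤ (T : ℝ)⁻¹ * (L / 2 * ‖x₀ - xs‖ ^ 2) :=
      mul_le_mul_of_nonneg_left key (by positivity)
    have h3 : (T : ℝ)⁻¹ * ∑ t ∈ Finset.range T, (f (w t) - f xs)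
        = (T : ℝ)⁻¹ * ∑ t ∈ Finset.range T, f (w t) - f xs := by
      rw [hsum, mul_sub, ← mul_assoc, inv_mul_cancel₀ (ne_of_gt hTpos), one_mul]
    linarith
  calc f ((T : ℝ)⁻¹ • ∑ t ∈ Finset.range T, w t) - f xs
      ≤ (T : ℝ)⁻¹ * (L / 2 * ‖x₀ - xs‖ ^ 2) := hfinal
    _ = L * ‖x₀ - xs‖ ^ 2 / (2 * T) := by
        have hT0 : (T:ℝ) ≠ 0 := ne_of_gt hTpos
        field_simp
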